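/- arXiv:1404.4699 — 3 statements merged into one kernel-verified Lean document; each statement's English description precedes it below -/
import Mathlib

section
/- For the double integrator switched system ẋ_1 = x_2, ẋ_2 = ±1 with x(0) = (1,1), x(T) = (0,0) and state constraint x_2(t) ≥ −1, the relaxed minimum time is 7/2, achieved by the relaxed control u_2 − u_1 = −1 on [0,2], 0 on [2,5/2], +1 on [5/2,7/2], with corresponding trajectory x_2(t) = 1 − t on [0,2], x_2 ≡ −1 on [2,5/2], x_2(t) = t − 7/2 on [5/2,7/2]. -/
open MeasureTheory

namespace Stmt9Aux

lemma lin_intOn (p q a b : ℝ) : IntegrableOn (fun s => p + q * s) (Set.Ioc a b) :=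
  ((continuous_const.add (continuous_const.mul continuous_id)).integrableOn_Ioc)

lemma lin_int (p q a b : ℝ) (hab : a ≤ b) :
    ∫ s in Set.Ioc a b, (p + q * s) = p * (b - a) + q * (b ^ 2 - a ^ 2) / 2 := by
  rw [← intervalIntegral.integral_of_le hab,
    intervalIntegral.integral_add intervalIntegrable_const
      (intervalIntegral.intervalIntegrable_id.const_mul q),
    intervalIntegral.integral_const_mul, integral_id, intervalIntegral.integral_const]
  simp only [smul_eq_mul]; ring

lemma const_int (c a b : ℝ) (hab : a ≤ b) :
    ∫ _ in Set.Ioc a b, c = c * (b - a) := by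
  rw [setIntegral_const, Real.volume_real_Ioc_of_le hab,
    smul_eq_mul]
  ring

lemma split (f : ℝ → ℝ) {a b c : ℝ} (hab : a ≤ b) (hbc : b ≤ c)
    (h1 : IntegrableOn f (Set.Ioc a b)) (h2 : IntegrableOn f (Set.Ioc b c)) :
    ∫ s in Set.Ioc a c, f s = (∫ s in Set.Ioc a b, f s) + ∫ s in Set.Ioc b c, f s := by
  rw [← Set.Ioc_union_Ioc_eq_Ioc hab hbc,
    setIntegral_union (Set.Ioc_disjoint_Ioc_of_le le_rfl) measurableSet_Ioc h1 h2]

lemma bdd_intOn {v : ℝ → ℝ} (hv : Measurable v) (hb : ∀ t, v t ∈ Set.Icc (-1:ℝ) 1) (a b : ℝ) :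
    IntegrableOn v (Set.Ioc a b) := by
  apply Measure.integrableOn_of_bounded (M := 1) measure_Ioc_lt_top.ne hv.aestronglyMeasurable
  filter_upwards with t
  rw [Real.norm_eq_abs, abs_le]
  exact ⟨(hb t).1, (hb t).2⟩

/-- The lower bound: any admissible time is at least `7/2`. -/
lemma lower {T : ℝ} {x1 x2 v : ℝ → ℝ}
    (hT : 0 ≤ T) (hv : Measurable v) (hb : ∀ t, v t ∈ Set.Icc (-1:ℝ) 1)
    (hx1T : x1 T = 0) (hx2T : x2 T = 0)
    (hcon : ∀ t ∈ Set.Icc 0 T, -1 ≤ x2 t)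
    (hfx1 : ∀ t ∈ Set.Icc 0 T, x1 t = 1 + ∫ s in Set.Ioc (0:ℝ) t, x2 s)
    (hfx2 : ∀ t ∈ Set.Icc 0 T, x2 t = 1 + ∫ s in Set.Ioc (0:ℝ) t, v s) :
    7 / 2 ≤ T := by
  have hvi : ∀ a b : ℝ, IntegrableOn v (Set.Ioc a b) := bdd_intOn hv hb
  -- lower bound x2 t ≥ 1 - t
  have hlow1 : ∀ t ∈ Set.Icc (0:ℝ) T, 1 - t ≤ x2 t := by
    intro t ht
    rw [hfx2 t ht]
    have h1 : ∫ _ in Set.Ioc (0:ℝ) t, (-1:ℝ) ≤ ∫ s in Set.Ioc (0:ℝ) t, v s :=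
      setIntegral_mono_on (integrableOn_const measure_Ioc_lt_top.ne) (hvi 0 t)
        measurableSet_Ioc (fun s _ => (hb s).1)
    rw [const_int _ _ _ ht.1] at h1
    linarith
  have hT1 : 1 ≤ T := by
    have := hlow1 T ⟨hT, le_rfl⟩
    rw [hx2T] at this; linarith
  -- upper bound on tail integral of v
  have hupp : ∀ t ∈ Set.Icc (0:ℝ) T, ∫ s in Set.Ioc t T, v s ≤ T - t := by
    intro t ht
    have h1 : ∫ s in Set.Ioc t T, v s ≤ ∫ _ in Set.Ioc t T, (1:ℝ) :=
      setIntegral_mono_on (hvi t T) (integrableOn_const measure_Ioc_lt_top.ne)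
        measurableSet_Ioc (fun s _ => (hb s).2)
    rw [const_int _ _ _ ht.2] at h1
    linarith
  -- lower bound x2 t ≥ t - T
  have hlow2 : ∀ t ∈ Set.Icc (0:ℝ) T, t - T ≤ x2 t := by
    intro t ht
    have hs := split v ht.1 ht.2 (hvi 0 t) (hvi t T)
    have h2 := hfx2 T ⟨hT, le_rfl⟩
    have h3 := hfx2 t ht
    have h4 := hupp t ht
    rw [hx2T] at h2
    linarith
  -- x2 is Lipschitz on [0,T], hence integrable
  have hdiff : ∀ s ∈ Set.Icc (0:ℝ) T, ∀ t ∈ Set.Icc (0:ℝ) T, s ≤ t →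
      |x2 t - x2 s| ≤ t - s := by
    intro s hs t ht hst
    have h1 := hfx2 s hs
    have h2 := hfx2 t ht
    have hsplit := split v hs.1 hst (hvi 0 s) (hvi s t)
    have key : x2 t - x2 s = ∫ u in Set.Ioc s t, v u := by
      rw [h1, h2]; linarith
    rw [key, ← Real.norm_eq_abs]
    have := norm_setIntegral_le_of_norm_le_const_ae' (μ := volume) (s := Set.Ioc s t)
      (f := v) (C := 1) measure_Ioc_lt_top
      (Filter.Eventually.of_forall fun u _ => by
        rw [Real.norm_eq_abs, abs_le]; exact ⟨(hb u).1, (hb u).2⟩)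
    rw [Real.volume_real_Ioc_of_le hst] at this
    linarith
  have hlip : LipschitzOnWith 1 x2 (Set.Icc 0 T) := by
    apply LipschitzOnWith.of_dist_le_mul
    intro s hs t ht
    simp only [NNReal.coe_one, one_mul, Real.dist_eq]
    rcases le_total s t with h | h
    · rw [abs_sub_comm (x2 s), abs_sub_comm s t, abs_of_nonneg (sub_nonneg.2 h)]
      exact hdiff s hs t ht h
    · rw [abs_of_nonneg (sub_nonneg.2 h)]
      exact hdiff t ht s hs h
  have hx2int : IntegrableOn x2 (Set.Ioc 0 T) :=
    (hlip.continuousOn.integrableOn_Icc).mono_set Set.Ioc_subset_Icc_self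
  have hsum : ∫ s in Set.Ioc (0:ℝ) T, x2 s = -1 := by
    have := hfx1 T ⟨hT, le_rfl⟩
    rw [hx1T] at this; linarith
  rcases le_or_gt 3 T with h3 | h3
  · -- main case
    set f : ℝ → ℝ := fun t => if t ≤ 2 then 1 - t else if t ≤ T - 1 then -1 else t - T with hf
    have e1 : Set.EqOn f (fun s => 1 + (-1) * s) (Set.Ioc 0 2) := fun s hs => by
      simp only [hf]; rw [if_pos hs.2]; ring
    have e2 : Set.EqOn f (fun s => -1 + 0 * s) (Set.Ioc 2 (T - 1)) := fun s hs => by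
      simp only [hf]; rw [if_neg (not_le.2 hs.1), if_pos hs.2]; ring
    have e3 : Set.EqOn f (fun s => -T + 1 * s) (Set.Ioc (T - 1) T) := fun s hs => by
      have h2 : ¬s ≤ 2 := not_le.2 (lt_of_le_of_lt (by linarith) hs.1)
      simp only [hf]; rw [if_neg h2, if_neg (not_le.2 hs.1)]; ring
    have i1 : IntegrableOn f (Set.Ioc 0 2) :=
      (lin_intOn 1 (-1) 0 2).congr_fun e1.symm measurableSet_Ioc
    have i2 : IntegrableOn f (Set.Ioc 2 (T - 1)) :=
      (lin_intOn (-1) 0 2 (T - 1)).congr_fun e2.symm measurableSet_Ioc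
    have i3 : IntegrableOn f (Set.Ioc (T - 1) T) :=
      (lin_intOn (-T) 1 (T - 1) T).congr_fun e3.symm measurableSet_Ioc
    have h2T1 : (2:ℝ) ≤ T - 1 := by linarith
    have hT1T : T - 1 ≤ T := by linarith
    have i23 : IntegrableOn f (Set.Ioc 2 T) := by
      rw [← Set.Ioc_union_Ioc_eq_Ioc h2T1 hT1T]; exact i2.union i3
    have ifull : IntegrableOn f (Set.Ioc 0 T) := by
      rw [← Set.Ioc_union_Ioc_eq_Ioc (by norm_num : (0:ℝ) ≤ 2) (by linarith : (2:ℝ) ≤ T)]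
      exact i1.union i23
    have v1 : ∫ s in Set.Ioc (0:ℝ) 2, f s = 0 := by
      rw [setIntegral_congr_fun measurableSet_Ioc e1, lin_int _ _ _ _ (by norm_num)]; norm_num
    have v2 : ∫ s in Set.Ioc (2:ℝ) (T - 1), f s = -(T - 3) := by
      rw [setIntegral_congr_fun measurableSet_Ioc e2, lin_int _ _ _ _ h2T1]; ring
    have v3 : ∫ s in Set.Ioc (T - 1) T, f s = -(1 / 2) := by
      rw [setIntegral_congr_fun measurableSet_Ioc e3, lin_int _ _ _ _ hT1T]; ring
    have vtotal : ∫ s in Set.Ioc (0:ℝ) T, f s = 5 / 2 - T := by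
      rw [split f (by norm_num : (0:ℝ) ≤ 2) (by linarith) i1 i23,
        split f h2T1 hT1T i2 i3, v1, v2, v3]; ring
    have hmono : ∫ s in Set.Ioc (0:ℝ) T, f s ≤ ∫ s in Set.Ioc (0:ℝ) T, x2 s := by
      apply setIntegral_mono_on ifull hx2int measurableSet_Ioc
      intro t ht
      have htI : t ∈ Set.Icc (0:ℝ) T := Set.Ioc_subset_Icc_self ht
      simp only [hf]
      split_ifs with h1' h2'
      · exact hlow1 t htI
      · exact hcon t htI
      · exact hlow2 t htI
    rw [vtotal, hsum] at hmono
    linarith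
  · -- T < 3 : contradiction
    exfalso
    set m : ℝ := (T + 1) / 2 with hm
    have hm0 : (0:ℝ) ≤ m := by simp only [hm]; linarith
    have hmT : m ≤ T := by simp only [hm]; linarith
    set f : ℝ → ℝ := fun t => if t ≤ m then 1 - t else t - T with hf
    have e1 : Set.EqOn f (fun s => 1 + (-1) * s) (Set.Ioc 0 m) := fun s hs => by
      simp only [hf]; rw [if_pos hs.2]; ring
    have e2 : Set.EqOn f (fun s => -T + 1 * s) (Set.Ioc m T) := fun s hs => by
      simp only [hf]; rw [if_neg (not_le.2 hs.1)]; ring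
    have i1 : IntegrableOn f (Set.Ioc 0 m) :=
      (lin_intOn 1 (-1) 0 m).congr_fun e1.symm measurableSet_Ioc
    have i2 : IntegrableOn f (Set.Ioc m T) :=
      (lin_intOn (-T) 1 m T).congr_fun e2.symm measurableSet_Ioc
    have ifull : IntegrableOn f (Set.Ioc 0 T) := by
      rw [← Set.Ioc_union_Ioc_eq_Ioc hm0 hmT]; exact i1.union i2
    have v1 : ∫ s in Set.Ioc (0:ℝ) m, f s = m - m ^ 2 / 2 := by
      rw [setIntegral_congr_fun measurableSet_Ioc e1, lin_int _ _ _ _ hm0]; ring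
    have v2 : ∫ s in Set.Ioc m T, f s = -T * (T - m) + (T ^ 2 - m ^ 2) / 2 := by
      rw [setIntegral_congr_fun measurableSet_Ioc e2, lin_int _ _ _ _ hmT]; ring
    have vtotal : ∫ s in Set.Ioc (0:ℝ) T, f s
        = m - m ^ 2 / 2 + (-T * (T - m) + (T ^ 2 - m ^ 2) / 2) := by
      rw [split f hm0 hmT i1 i2, v1, v2]
    have hmono : ∫ s in Set.Ioc (0:ℝ) T, f s ≤ ∫ s in Set.Ioc (0:ℝ) T, x2 s := by
      apply setIntegral_mono_on ifull hx2int measurableSet_Ioc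
      intro t ht
      have htI : t ∈ Set.Icc (0:ℝ) T := Set.Ioc_subset_Icc_self ht
      simp only [hf]
      split_ifs with h1'
      · exact hlow1 t htI
      · exact hlow2 t htI
    rw [vtotal, hsum] at hmono
    simp only [hm] at hmono
    nlinarith [hmono, h3, hT1]

end Stmt9Aux

/-- For the double integrator `ẋ₁ = x₂`, `ẋ₂ = v ∈ [-1,1]` with `x(0) = (1,1)`,
`x(T) = (0,0)` and state constraint `x₂ ≥ -1`, the relaxed minimum time is `7/2`,
achieved by `v = -1` on `[0,2]`, `v = 0` on `[2,5/2]`, `v = 1` on `[5/2,7/2]`,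
with `x₂(t) = 1 - t`, then `-1`, then `t - 7/2`. -/
theorem stmt_9
    (Adm : ℝ → (ℝ → ℝ) → (ℝ → ℝ) → (ℝ → ℝ) → Prop)
    (hAdm : ∀ T x1 x2 v, Adm T x1 x2 v ↔
      (0 ≤ T ∧ Measurable v ∧ (∀ t, v t ∈ Set.Icc (-1:ℝ) 1) ∧
       x1 0 = 1 ∧ x2 0 = 1 ∧ x1 T = 0 ∧ x2 T = 0 ∧
       (∀ t ∈ Set.Icc 0 T, -1 ≤ x2 t) ∧
       (∀ t ∈ Set.Icc 0 T, x1 t = 1 + ∫ s in Set.Ioc (0:ℝ) t, x2 s) ∧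
       (∀ t ∈ Set.Icc 0 T, x2 t = 1 + ∫ s in Set.Ioc (0:ℝ) t, v s)))
    (vs x2s x1s : ℝ → ℝ)
    (hvs : vs = fun t => if t ≤ 2 then -1 else if t ≤ 5/2 then 0 else 1)
    (hx2s : x2s = fun t => if t ≤ 2 then 1 - t else if t ≤ 5/2 then -1 else t - 7/2)
    (hx1s : x1s = fun t => 1 + ∫ s in Set.Ioc (0:ℝ) t, x2s s) :
    IsLeast {T : ℝ | ∃ x1 x2 v, Adm T x1 x2 v} (7/2) ∧
    Adm (7/2) x1s x2s vs := by
  -- facts about vs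
  have hvm : Measurable vs := by
    rw [hvs]
    exact Measurable.ite (measurableSet_le measurable_id measurable_const) measurable_const
      (Measurable.ite (measurableSet_le measurable_id measurable_const) measurable_const
        measurable_const)
  have hvb : ∀ t, vs t ∈ Set.Icc (-1:ℝ) 1 := by
    intro t; rw [hvs]; simp only [Set.mem_Icc]; split_ifs <;> norm_num
  -- EqOn lemmas for vs
  have ev1 : ∀ t : ℝ, t ≤ 2 → Set.EqOn vs (fun s => -1 + 0 * s) (Set.Ioc 0 t) := by
    intro t ht s hs
    rw [hvs]; simp only; rw [if_pos (hs.2.trans ht)]; ring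
  have ev2 : ∀ t : ℝ, t ≤ 5/2 → Set.EqOn vs (fun s => 0 + 0 * s) (Set.Ioc 2 t) := by
    intro t ht s hs
    rw [hvs]; simp only; rw [if_neg (not_le.2 hs.1), if_pos (hs.2.trans ht)]; ring
  have ev3 : ∀ t : ℝ, Set.EqOn vs (fun s => 1 + 0 * s) (Set.Ioc (5/2) t) := by
    intro t s hs
    rw [hvs]; simp only
    rw [if_neg (not_le.2 (lt_of_le_of_lt (by norm_num) hs.1)), if_neg (not_le.2 hs.1)]; ring
  -- EqOn lemmas for x2s
  have ex1 : Set.EqOn x2s (fun s => 1 + (-1) * s) (Set.Ioc 0 2) := by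
    intro s hs; rw [hx2s]; simp only; rw [if_pos hs.2]; ring
  have ex2 : Set.EqOn x2s (fun s => -1 + 0 * s) (Set.Ioc 2 (5/2)) := by
    intro s hs; rw [hx2s]; simp only; rw [if_neg (not_le.2 hs.1), if_pos hs.2]; ring
  have ex3 : Set.EqOn x2s (fun s => -(7/2) + 1 * s) (Set.Ioc (5/2) (7/2)) := by
    intro s hs; rw [hx2s]; simp only
    rw [if_neg (not_le.2 (lt_of_le_of_lt (by norm_num) hs.1)), if_neg (not_le.2 hs.1)]; ring
  have hvi : ∀ a b : ℝ, IntegrableOn vs (Set.Ioc a b) := Stmt9Aux.bdd_intOn hvm hvb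
  -- integral of vs up to t
  have hIv : ∀ t ∈ Set.Icc (0:ℝ) (7/2), (∫ s in Set.Ioc (0:ℝ) t, vs s) =
      if t ≤ 2 then -t else if t ≤ 5/2 then -2 else t - 9/2 := by
    intro t ht
    rcases le_or_gt t 2 with h1 | h1
    · rw [if_pos h1, setIntegral_congr_fun measurableSet_Ioc (ev1 t h1),
        Stmt9Aux.lin_int _ _ _ _ ht.1]
      ring
    rcases le_or_gt t (5/2) with h2 | h2
    · rw [if_neg (not_le.2 h1), if_pos h2,
        Stmt9Aux.split vs (by norm_num) h1.le (hvi 0 2) (hvi 2 t),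
        setIntegral_congr_fun measurableSet_Ioc (ev1 2 le_rfl),
        setIntegral_congr_fun measurableSet_Ioc (ev2 t h2),
        Stmt9Aux.lin_int _ _ _ _ (by norm_num : (0:ℝ) ≤ 2), Stmt9Aux.lin_int _ _ _ _ h1.le]
      ring
    · rw [if_neg (not_le.2 h1), if_neg (not_le.2 h2),
        Stmt9Aux.split vs (by norm_num) (by linarith : (2:ℝ) ≤ t) (hvi 0 2) (hvi 2 t),
        Stmt9Aux.split vs (by norm_num) h2.le (hvi 2 (5/2)) (hvi (5/2) t),
        setIntegral_congr_fun measurableSet_Ioc (ev1 2 le_rfl),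
        setIntegral_congr_fun measurableSet_Ioc (ev2 (5/2) le_rfl),
        setIntegral_congr_fun measurableSet_Ioc (ev3 t),
        Stmt9Aux.lin_int _ _ _ _ (by norm_num : (0:ℝ) ≤ 2),
        Stmt9Aux.lin_int _ _ _ _ (by norm_num : (2:ℝ) ≤ 5/2), Stmt9Aux.lin_int _ _ _ _ h2.le]
      ring
  -- integral of x2s over [0, 7/2]
  have hIx2 : (∫ s in Set.Ioc (0:ℝ) (7/2), x2s s) = -1 := by
    have ix1 : IntegrableOn x2s (Set.Ioc 0 2) :=
      (Stmt9Aux.lin_intOn 1 (-1) 0 2).congr_fun ex1.symm measurableSet_Ioc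
    have ix2 : IntegrableOn x2s (Set.Ioc 2 (5/2)) :=
      (Stmt9Aux.lin_intOn (-1) 0 2 (5/2)).congr_fun ex2.symm measurableSet_Ioc
    have ix3 : IntegrableOn x2s (Set.Ioc (5/2) (7/2)) :=
      (Stmt9Aux.lin_intOn (-(7/2)) 1 (5/2) (7/2)).congr_fun ex3.symm measurableSet_Ioc
    have ix23 : IntegrableOn x2s (Set.Ioc 2 (7/2)) := by
      rw [← Set.Ioc_union_Ioc_eq_Ioc (by norm_num : (2:ℝ) ≤ 5/2) (by norm_num : (5:ℝ)/2 ≤ 7/2)]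
      exact ix2.union ix3
    rw [Stmt9Aux.split x2s (by norm_num : (0:ℝ) ≤ 2) (by norm_num : (2:ℝ) ≤ 7/2) ix1 ix23,
      Stmt9Aux.split x2s (by norm_num : (2:ℝ) ≤ 5/2) (by norm_num : (5:ℝ)/2 ≤ 7/2) ix2 ix3,
      setIntegral_congr_fun measurableSet_Ioc ex1,
      setIntegral_congr_fun measurableSet_Ioc ex2,
      setIntegral_congr_fun measurableSet_Ioc ex3,
      Stmt9Aux.lin_int _ _ _ _ (by norm_num : (0:ℝ) ≤ 2),
      Stmt9Aux.lin_int _ _ _ _ (by norm_num : (2:ℝ) ≤ 5/2),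
      Stmt9Aux.lin_int _ _ _ _ (by norm_num : (5:ℝ)/2 ≤ 7/2)]
    norm_num
  have hfeas : Adm (7/2) x1s x2s vs := by
    rw [hAdm]
    refine ⟨by norm_num, hvm, hvb, ?_, ?_, ?_, ?_, ?_, ?_, ?_⟩
    · rw [hx1s]; simp
    · rw [hx2s]; norm_num
    · rw [hx1s]; simp only; rw [hIx2]; norm_num
    · rw [hx2s]; norm_num
    · intro t ht
      rw [hx2s]; simp only
      split_ifs with h1 h2
      · linarith [ht.1]
      · norm_num
      · push_neg at h2; linarith
    · intro t _
      rw [hx1s]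
    · intro t ht
      rw [hx2s, hIv t ht]; simp only
      split_ifs with h1 h2 <;> ring
  refine ⟨⟨⟨x1s, x2s, vs, hfeas⟩, ?_⟩, hfeas⟩
  rintro T ⟨x1, x2, v, hA⟩
  rw [hAdm] at hA
  obtain ⟨hT, hv, hb, _, _, h1T, h2T, hcon, hf1, hf2⟩ := hA
  exact Stmt9Aux.lower hT hv hb h1T h2T hcon hf1 hf2
end

section
/- For the double integrator with state constraint x_2 ≥ −1, any trajectory with ẋ_1 = x_2, ẋ_2 = v(t) ∈ [−1,1], x(0) = (1,1), x(T) = (0,0) satisfies T ≥ 7/2. -/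
open MeasureTheory intervalIntegral

/-- Lower bound for the constrained double integrator: any trajectory with
`ẋ₁ = x₂`, `ẋ₂ = v(t) ∈ [-1,1]`, `x₂ ≥ -1`, steering `(1,1)` at time `0` to
`(0,0)` at time `T` satisfies `T ≥ 7/2`. -/
theorem stmt_10 (T : ℝ) (x1 x2 v : ℝ → ℝ)
    (hT : 0 ≤ T)
    (hv : Measurable v) (hv1 : ∀ t, v t ∈ Set.Icc (-1:ℝ) 1)
    (hinit1 : x1 0 = 1) (hinit2 : x2 0 = 1)
    (hfin1 : x1 T = 0) (hfin2 : x2 T = 0)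
    (hcon : ∀ t ∈ Set.Icc 0 T, -1 ≤ x2 t)
    (hx1 : ∀ t ∈ Set.Icc 0 T, x1 t = 1 + ∫ s in Set.Ioc (0:ℝ) t, x2 s)
    (hx2 : ∀ t ∈ Set.Icc 0 T, x2 t = 1 + ∫ s in Set.Ioc (0:ℝ) t, v s) :
    7/2 ≤ T := by
  -- v is interval integrable everywhere
  have hvabs : ∀ s, |v s| ≤ 1 := fun s => abs_le.2 ⟨(hv1 s).1, (hv1 s).2⟩
  have hvint : ∀ a b : ℝ, IntervalIntegrable v volume a b := by
    intro a b
    rw [intervalIntegrable_iff]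
    refine Measure.integrableOn_of_bounded (by simp [Set.uIoc]) ?_
      (ae_of_all _ fun s => by simpa using hvabs s)
    exact hv.aestronglyMeasurable
  -- reformulate hx2 via interval integrals
  have hx2' : ∀ t ∈ Set.Icc (0:ℝ) T, x2 t = 1 + ∫ s in (0:ℝ)..t, v s := by
    intro t ht
    rw [intervalIntegral.integral_of_le ht.1]
    exact hx2 t ht
  -- pointwise lower bound 1 - s ≤ x2 s
  have hlow1 : ∀ s ∈ Set.Icc (0:ℝ) T, 1 - s ≤ x2 s := by
    intro s hs
    rw [hx2' s hs]
    have : (-s : ℝ) ≤ ∫ u in (0:ℝ)..s, v u := by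
      have := intervalIntegral.integral_mono_on hs.1
        (_root_.intervalIntegrable_const (c := (-1:ℝ))) (hvint 0 s)
        (fun u _ => (hv1 u).1)
      simpa using this
    linarith
  -- pointwise lower bound s - T ≤ x2 s
  have hvT : (∫ s in (0:ℝ)..T, v s) = -1 := by
    have h0 := hx2' T ⟨hT, le_refl T⟩
    rw [hfin2] at h0; linarith
  have hlow2 : ∀ s ∈ Set.Icc (0:ℝ) T, s - T ≤ x2 s := by
    intro s hs
    have hsplit : (∫ u in (0:ℝ)..s, v u) + ∫ u in s..T, v u = ∫ u in (0:ℝ)..T, v u :=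
      intervalIntegral.integral_add_adjacent_intervals (hvint 0 s) (hvint s T)
    have hub : (∫ u in s..T, v u) ≤ T - s := by
      have := intervalIntegral.integral_mono_on hs.2 (hvint s T)
        (_root_.intervalIntegrable_const (c := (1:ℝ))) (fun u _ => (hv1 u).2)
      simpa using this
    rw [hx2' s hs]
    rw [hvT] at hsplit
    linarith
  -- integrability of x2 on [0,T]
  have hfc : Continuous fun t => 1 + ∫ s in (0:ℝ)..t, v s :=
    continuous_const.add (intervalIntegral.continuous_primitive hvint 0)
  have hx2int : ∀ a b : ℝ, a ∈ Set.Icc (0:ℝ) T → b ∈ Set.Icc (0:ℝ) T → a ≤ b →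
      IntervalIntegrable x2 volume a b := by
    intro a b ha hb hab
    rw [intervalIntegrable_iff_integrableOn_Ioc_of_le hab]
    have : IntegrableOn (fun t => 1 + ∫ s in (0:ℝ)..t, v s) (Set.Ioc a b) :=
      hfc.integrableOn_Ioc
    refine this.congr_fun (fun t ht => ?_) measurableSet_Ioc
    exact (hx2' t ⟨le_trans ha.1 (le_of_lt ht.1), le_trans ht.2 hb.2⟩).symm
  -- total integral of x2 equals -1
  have hItot : (∫ s in (0:ℝ)..T, x2 s) = -1 := by
    have h1 := hx1 T ⟨hT, le_refl T⟩
    rw [hfin1] at h1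
    rw [intervalIntegral.integral_of_le hT]
    linarith
  -- case analysis
  by_contra hcon7
  push_neg at hcon7
  rcases lt_or_ge T 2 with h2 | h2
  · -- T < 2 : ∫ ≥ T - T^2/2 ≥ 0 > -1
    have hmono := intervalIntegral.integral_mono_on hT
      (IntervalIntegrable.sub _root_.intervalIntegrable_const intervalIntegrable_id)
      (hx2int 0 T ⟨le_refl 0, hT⟩ ⟨hT, le_refl T⟩ hT)
      (fun s hs => hlow1 s hs)
    rw [hItot] at hmono
    rw [intervalIntegral.integral_sub _root_.intervalIntegrable_const intervalIntegrable_id,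
      intervalIntegral.integral_const, integral_id] at hmono
    simp at hmono
    nlinarith
  · rcases lt_or_ge T 3 with h3 | h3
    · -- 2 ≤ T < 3
      have ha : (2:ℝ) ∈ Set.Icc (0:ℝ) T := ⟨by norm_num, h2⟩
      have hsplit : (∫ s in (0:ℝ)..2, x2 s) + ∫ s in (2:ℝ)..T, x2 s = ∫ s in (0:ℝ)..T, x2 s :=
        intervalIntegral.integral_add_adjacent_intervals
          (hx2int 0 2 ⟨le_refl 0, hT⟩ ha (by norm_num))
          (hx2int 2 T ha ⟨hT, le_refl T⟩ h2)
      have hm1 := intervalIntegral.integral_mono_on (by norm_num : (0:ℝ) ≤ 2)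
        (IntervalIntegrable.sub _root_.intervalIntegrable_const intervalIntegrable_id)
        (hx2int 0 2 ⟨le_refl 0, hT⟩ ha (by norm_num))
        (fun s hs => hlow1 s ⟨hs.1, le_trans hs.2 h2⟩)
      have hm2 := intervalIntegral.integral_mono_on h2
        (_root_.intervalIntegrable_const (c := (-1:ℝ)))
        (hx2int 2 T ha ⟨hT, le_refl T⟩ h2)
        (fun s hs => hcon s ⟨le_trans (by norm_num) hs.1, hs.2⟩)
      rw [intervalIntegral.integral_sub _root_.intervalIntegrable_const intervalIntegrable_id,
        intervalIntegral.integral_const, integral_id] at hm1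
      rw [intervalIntegral.integral_const] at hm2
      rw [hItot] at hsplit
      norm_num at hm1 hm2
      linarith
    · -- 3 ≤ T
      have ha : (2:ℝ) ∈ Set.Icc (0:ℝ) T := ⟨by norm_num, by linarith⟩
      have hb : (T - 1) ∈ Set.Icc (0:ℝ) T := ⟨by linarith, by linarith⟩
      have h2b : (2:ℝ) ≤ T - 1 := by linarith
      have hsplit1 : (∫ s in (2:ℝ)..(T-1), x2 s) + ∫ s in (T-1)..T, x2 s
          = ∫ s in (2:ℝ)..T, x2 s :=
        intervalIntegral.integral_add_adjacent_intervals
          (hx2int 2 (T-1) ha hb h2b)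
          (hx2int (T-1) T hb ⟨hT, le_refl T⟩ (by linarith))
      have hsplit0 : (∫ s in (0:ℝ)..2, x2 s) + ∫ s in (2:ℝ)..T, x2 s = ∫ s in (0:ℝ)..T, x2 s :=
        intervalIntegral.integral_add_adjacent_intervals
          (hx2int 0 2 ⟨le_refl 0, hT⟩ ha (by norm_num))
          (hx2int 2 T ha ⟨hT, le_refl T⟩ (by linarith))
      have hm1 := intervalIntegral.integral_mono_on (by norm_num : (0:ℝ) ≤ 2)
        (IntervalIntegrable.sub _root_.intervalIntegrable_const intervalIntegrable_id)
        (hx2int 0 2 ⟨le_refl 0, hT⟩ ha (by norm_num))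
        (fun s hs => hlow1 s ⟨hs.1, le_trans hs.2 (by linarith)⟩)
      have hm2 := intervalIntegral.integral_mono_on h2b
        (_root_.intervalIntegrable_const (c := (-1:ℝ)))
        (hx2int 2 (T-1) ha hb h2b)
        (fun s hs => hcon s ⟨le_trans (by norm_num) hs.1, le_trans hs.2 (by linarith)⟩)
      have hm3 := intervalIntegral.integral_mono_on (by linarith : T - 1 ≤ T)
        (IntervalIntegrable.sub intervalIntegrable_id _root_.intervalIntegrable_const)
        (hx2int (T-1) T hb ⟨hT, le_refl T⟩ (by linarith))
        (fun s hs => hlow2 s ⟨le_trans (by linarith) hs.1, hs.2⟩)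
      rw [intervalIntegral.integral_sub _root_.intervalIntegrable_const intervalIntegrable_id,
        intervalIntegral.integral_const, integral_id] at hm1
      rw [intervalIntegral.integral_const] at hm2
      rw [intervalIntegral.integral_sub intervalIntegrable_id _root_.intervalIntegrable_const,
        intervalIntegral.integral_const, integral_id] at hm3
      rw [hItot] at hsplit0
      norm_num at hm1 hm2 hm3
      nlinarith
end

section
/- Equivalence of unstructured and modal measure LPs: the optimal value of the LP over a single measure μ ∈ M^+(K × U) (U the standard simplex vertices set or simplex) with constraints ⟨∂v/∂t + ∇_x v · Σ_j f_j u_j, μ⟩ = v(T,x_T) − v(0,x_0) for all v ∈ C^1(K), cost ⟨Σ_j l_j u_j, μ⟩, equals the optimal value of the LP over m measures μ_j ∈ M^+(K) with constraints Σ_j ⟨∂v/∂t + ∇_x v · f_j, μ_j⟩ = v(T,x_T) − v(0,x_0) and cost Σ_j ⟨l_j, μ_j⟩. -/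
open MeasureTheory

variable {n m : ℕ}

private lemma restrict_finset_sum {α : Type*} [MeasurableSpace α]
    (μ : Fin m → Measure α) (t : Set α) :
    (∑ j, μ j).restrict t = ∑ j, (μ j).restrict t := by
  ext A hA
  simp [Measure.restrict_apply hA, Measure.finset_sum_apply]

/-- Key computation: integrating over `K ×ˢ U` against the sum of the
lifted modal measures equals the sum of modal set integrals. -/
private lemma key_integral (T : ℝ) (X : Set (Fin n → ℝ)) (hX : IsCompact X)
    (e : Fin m → (Fin m → ℝ)) (U : Set (Fin m → ℝ)) (hU : U = Set.range e)
    (ν : Fin m → Measure (ℝ × (Fin n → ℝ))) (hfin : ∀ j, IsFiniteMeasure (ν j))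
    (hν : ∀ j, ν j (Set.Icc 0 T ×ˢ X)ᶜ = 0)
    (g : (ℝ × (Fin n → ℝ)) × (Fin m → ℝ) → ℝ)
    (hg : ContinuousOn g ((Set.Icc 0 T ×ˢ X) ×ˢ (Set.univ : Set (Fin m → ℝ)))) :
    (∫ q in (Set.Icc 0 T ×ˢ X) ×ˢ U, g q
        ∂(∑ j, (ν j).map (fun p => (p, e j))))
      = ∑ j, ∫ p in Set.Icc 0 T ×ˢ X, g (p, e j) ∂(ν j) := by
  have hKc : IsCompact (Set.Icc 0 T ×ˢ X) := isCompact_Icc.prod hX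
  have hKm : MeasurableSet (Set.Icc 0 T ×ˢ X) :=
    measurableSet_Icc.prod hX.isClosed.measurableSet
  have hUm : MeasurableSet U := by
    rw [hU]; exact (Set.finite_range e).isClosed.measurableSet
  have hKUm : MeasurableSet ((Set.Icc 0 T ×ˢ X) ×ˢ U) := hKm.prod hUm
  have hι : ∀ j, Measurable fun p : ℝ × (Fin n → ℝ) => (p, e j) := fun j =>
    measurable_prodMk_right
  -- rewrite each restricted summand as a pushforward of `ν j` restricted to `K`
  have hrw : ∀ j, ((ν j).map fun p => (p, e j)).restrict ((Set.Icc 0 T ×ˢ X) ×ˢ U)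
      = ((ν j).restrict (Set.Icc 0 T ×ˢ X)).map fun p => (p, e j) := by
    intro j
    rw [Measure.restrict_map (hι j) hKUm]
    congr 1
    ext p
    simp [hU, Set.mem_prod, Set.mem_range_self]
  -- each pushforward measure is concentrated on `K ×ˢ univ`
  have hnull : ∀ j, (((ν j).restrict (Set.Icc 0 T ×ˢ X)).map fun p => (p, e j))
      (((Set.Icc 0 T ×ˢ X) ×ˢ (Set.univ : Set (Fin m → ℝ)))ᶜ) = 0 := by
    intro j
    rw [Measure.map_apply (hι j) (hKm.prod MeasurableSet.univ).compl]
    have h2 : ((fun p : ℝ × (Fin n → ℝ) => (p, e j)) ⁻¹'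
        ((Set.Icc 0 T ×ˢ X) ×ˢ (Set.univ : Set (Fin m → ℝ)))ᶜ) = (Set.Icc 0 T ×ˢ X)ᶜ := by
      ext p; simp [Set.mem_prod]
    rw [h2, Measure.restrict_apply hKm.compl]
    simp
  have hself : ∀ j, ((((ν j).restrict (Set.Icc 0 T ×ˢ X)).map fun p => (p, e j)).restrict
        ((Set.Icc 0 T ×ˢ X) ×ˢ (Set.univ : Set (Fin m → ℝ))))
      = ((ν j).restrict (Set.Icc 0 T ×ˢ X)).map fun p => (p, e j) := fun j =>
    Measure.restrict_eq_self_of_ae_mem (ae_iff.mpr (hnull j))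
  have hgm : ∀ j, AEStronglyMeasurable g
      (((ν j).restrict (Set.Icc 0 T ×ˢ X)).map fun p => (p, e j)) := by
    intro j
    rw [← hself j]
    exact hg.aestronglyMeasurable (hKm.prod MeasurableSet.univ)
  -- integrability of `g` against each summand
  have hint : ∀ j, Integrable g
      (((ν j).restrict (Set.Icc 0 T ×ˢ X)).map fun p => (p, e j)) := by
    intro j
    have hcomp : ContinuousOn (fun p => g (p, e j)) (Set.Icc 0 T ×ˢ X) := by
      apply hg.comp (continuous_id.prodMk continuous_const).continuousOn
      intro p hp; exact ⟨hp, Set.mem_univ _⟩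
    obtain ⟨C, hC⟩ := hKc.exists_bound_of_continuousOn hcomp
    have := hfin j
    rw [integrable_map_measure (hgm j) (hι j).aemeasurable]
    refine ⟨(hcomp.aestronglyMeasurable hKm), HasFiniteIntegral.of_bounded (C := C) ?_⟩
    exact (ae_restrict_mem hKm).mono fun p hp => hC p hp
  calc (∫ q in (Set.Icc 0 T ×ˢ X) ×ˢ U, g q ∂(∑ j, (ν j).map (fun p => (p, e j))))
      = ∫ q, g q ∂(∑ j, (((ν j).restrict (Set.Icc 0 T ×ˢ X)).map fun p => (p, e j))) := by
        rw [restrict_finset_sum]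
        congr 1
        exact Finset.sum_congr rfl fun j _ => hrw j
    _ = ∑ j, ∫ q, g q ∂(((ν j).restrict (Set.Icc 0 T ×ˢ X)).map fun p => (p, e j)) :=
        integral_finset_sum_measure fun j _ => hint j
    _ = ∑ j, ∫ p in Set.Icc 0 T ×ˢ X, g (p, e j) ∂(ν j) :=
        Finset.sum_congr rfl fun j _ => integral_map (hι j).aemeasurable (hgm j)

/-- Decomposition of a measure concentrated on `K ×ˢ U`, `U = range e`,
into its modal components. -/
private lemma decomp_measure (T : ℝ) (X : Set (Fin n → ℝ)) (hX : IsCompact X)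
    (e : Fin m → (Fin m → ℝ)) (he : Function.Injective e)
    (U : Set (Fin m → ℝ)) (hU : U = Set.range e)
    (μ : Measure ((ℝ × (Fin n → ℝ)) × (Fin m → ℝ)))
    (hμ : μ ((Set.Icc 0 T ×ˢ X) ×ˢ U)ᶜ = 0) :
    μ = ∑ j, ((μ.restrict (Prod.snd ⁻¹' {e j})).map Prod.fst).map
      (fun p => (p, e j)) := by
  have hι : ∀ j, Measurable fun p : ℝ × (Fin n → ℝ) => (p, e j) := fun j =>
    measurable_prodMk_right
  have hsm : ∀ j, MeasurableSet (Prod.snd ⁻¹' ({e j} : Set (Fin m → ℝ))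
      : Set ((ℝ × (Fin n → ℝ)) × (Fin m → ℝ))) := fun j =>
    measurable_snd isClosed_singleton.measurableSet
  ext A hA
  rw [Measure.finset_sum_apply]
  have hterm : ∀ j, (((μ.restrict (Prod.snd ⁻¹' {e j})).map Prod.fst).map
      (fun p => (p, e j))) A = μ (A ∩ Prod.snd ⁻¹' {e j}) := by
    intro j
    rw [Measure.map_apply (hι j) hA,
      Measure.map_apply measurable_fst ((hι j) hA),
      Measure.restrict_apply (measurable_fst ((hι j) hA))]
    congr 1
    ext q
    constructor
    · rintro ⟨h1, h2⟩
      have h2' : q.2 = e j := h2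
      refine ⟨?_, h2⟩
      have : (q.1, e j) = q := by rw [← h2']
      have h1' : (q.1, e j) ∈ A := h1
      rwa [this] at h1'
    · rintro ⟨h1, h2⟩
      have h2' : q.2 = e j := h2
      refine ⟨?_, h2⟩
      have : (q.1, e j) = q := by rw [← h2']
      show (q.1, e j) ∈ A
      rwa [this]
  rw [Finset.sum_congr rfl fun j _ => hterm j]
  have hdisj : Pairwise (Function.onFun Disjoint
      fun j => A ∩ Prod.snd ⁻¹' ({e j} : Set (Fin m → ℝ))) := by
    intro j k hjk
    refine Set.disjoint_left.mpr ?_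
    rintro q ⟨_, h1⟩ ⟨_, h2⟩
    have e1 : q.2 = e j := h1
    have e2 : q.2 = e k := h2
    exact hjk (he (e1.symm.trans e2))
  have hsum := measure_iUnion (μ := μ) hdisj
    (fun j => hA.inter (hsm j))
  rw [tsum_fintype] at hsum
  rw [← hsum]
  have hcup : (⋃ j, A ∩ Prod.snd ⁻¹' ({e j} : Set (Fin m → ℝ)))
      = A ∩ Prod.snd ⁻¹' U := by
    rw [← Set.inter_iUnion]
    congr 1
    ext q
    simp [hU, Set.mem_range, eq_comm]
  rw [hcup]
  refine (measure_inter_conull (measure_mono_null ?_ hμ)).symm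
  intro q hq hmem
  exact hq hmem.2

/-- Equivalence of the unstructured and modal measure LPs for switched systems:
the optimal value of the LP over a single occupation measure on `K × U`
(`U` the set of standard unit vectors of `ℝ^m`) equals the optimal value of the LP
over `m` modal occupation measures on `K`. -/
theorem stmt_17 (n m : ℕ) (T : ℝ) (hT : 0 < T)
    (X : Set (Fin n → ℝ)) (hX : IsCompact X)
    (x0 xT : Fin n → ℝ) (hx0 : x0 ∈ X) (hxT : xT ∈ X)
    (l : Fin m → ℝ × (Fin n → ℝ) → ℝ)
    (f : Fin m → ℝ × (Fin n → ℝ) → (Fin n → ℝ))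
    (hl : ∀ j, ContinuousOn (l j) (Set.Icc 0 T ×ˢ X))
    (hf : ∀ j, ContinuousOn (f j) (Set.Icc 0 T ×ˢ X))
    (U : Set (Fin m → ℝ))
    (hU : U = Set.range fun j : Fin m => (Pi.single j 1 : Fin m → ℝ))
    (S1 S2 : Set ℝ)
    (hS1 : S1 = {c | ∃ μ : Measure ((ℝ × (Fin n → ℝ)) × (Fin m → ℝ)),
      IsFiniteMeasure μ ∧ μ ((Set.Icc 0 T ×ˢ X) ×ˢ U)ᶜ = 0 ∧
      (∀ v : ℝ × (Fin n → ℝ) → ℝ, ContDiff ℝ 1 v →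
        (∫ q in (Set.Icc 0 T ×ˢ X) ×ˢ U,
            (fderiv ℝ v q.1) (1, ∑ j, q.2 j • f j q.1) ∂μ)
          = v (T, xT) - v (0, x0)) ∧
      (∫ q in (Set.Icc 0 T ×ˢ X) ×ˢ U, ∑ j, q.2 j * l j q.1 ∂μ) = c})
    (hS2 : S2 = {c | ∃ μ : Fin m → Measure (ℝ × (Fin n → ℝ)),
      (∀ j, IsFiniteMeasure (μ j)) ∧ (∀ j, μ j (Set.Icc 0 T ×ˢ X)ᶜ = 0) ∧
      (∀ v : ℝ × (Fin n → ℝ) → ℝ, ContDiff ℝ 1 v →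
        (∑ j, ∫ p in Set.Icc 0 T ×ˢ X, (fderiv ℝ v p) (1, f j p) ∂(μ j))
          = v (T, xT) - v (0, x0)) ∧
      (∑ j, ∫ p in Set.Icc 0 T ×ˢ X, l j p ∂(μ j)) = c}) :
    sInf S1 = sInf S2 := by
  classical
  suffices hset : S1 = S2 by rw [hset]
  -- notation
  have hKm : MeasurableSet (Set.Icc (0:ℝ) T ×ˢ X) :=
    measurableSet_Icc.prod hX.isClosed.measurableSet
  set e : Fin m → (Fin m → ℝ) := fun j => Pi.single j 1 with he_def
  have hUe : U = Set.range e := hU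
  have he : Function.Injective e := by
    intro j k h
    by_contra hne
    have := congrFun h j
    simp [he_def, Pi.single_apply, hne] at this
  have hι : ∀ j, Measurable fun p : ℝ × (Fin n → ℝ) => (p, e j) := fun j =>
    measurable_prodMk_right
  have hUm : MeasurableSet U := by
    rw [hUe]; exact (Set.finite_range e).isClosed.measurableSet
  have hKUm : MeasurableSet ((Set.Icc (0:ℝ) T ×ˢ X) ×ˢ U) := hKm.prod hUm
  -- the two integrands and their continuity
  have hsingle_smul : ∀ (j : Fin m) (p : ℝ × (Fin n → ℝ)),
      (∑ k, e j k • f k p) = f j p := by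
    intro j p
    simp [he_def, Pi.single_apply, ite_smul]
  have hsingle_mul : ∀ (j : Fin m) (p : ℝ × (Fin n → ℝ)),
      (∑ k, e j k * l k p) = l j p := by
    intro j p
    simp [he_def, Pi.single_apply, ite_mul]
  have hgder : ∀ v : ℝ × (Fin n → ℝ) → ℝ, ContDiff ℝ 1 v →
      ContinuousOn (fun q : (ℝ × (Fin n → ℝ)) × (Fin m → ℝ) =>
        (fderiv ℝ v q.1) (1, ∑ j, q.2 j • f j q.1))
        ((Set.Icc 0 T ×ˢ X) ×ˢ (Set.univ : Set (Fin m → ℝ))) := by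
    intro v hv
    apply ContinuousOn.clm_apply
    · exact ((hv.continuous_fderiv one_ne_zero).comp continuous_fst).continuousOn
    · apply ContinuousOn.prodMk continuousOn_const
      apply continuousOn_finset_sum
      intro j _
      exact (((continuous_apply j).comp continuous_snd).continuousOn).smul
        ((hf j).comp continuous_fst.continuousOn fun q hq => hq.1)
  have hgcost : ContinuousOn (fun q : (ℝ × (Fin n → ℝ)) × (Fin m → ℝ) =>
      ∑ j, q.2 j * l j q.1)
      ((Set.Icc 0 T ×ˢ X) ×ˢ (Set.univ : Set (Fin m → ℝ))) := by
    apply continuousOn_finset_sum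
    intro j _
    exact (((continuous_apply j).comp continuous_snd).continuousOn).mul
      ((hl j).comp continuous_fst.continuousOn fun q hq => hq.1)
  rw [hS1, hS2]
  ext c
  simp only [Set.mem_setOf_eq]
  constructor
  · rintro ⟨μ, hfinμ, hμnull, hcon, hcost⟩
    haveI := hfinμ
    set ν : Fin m → Measure (ℝ × (Fin n → ℝ)) :=
      fun j => (μ.restrict (Prod.snd ⁻¹' {e j})).map Prod.fst with hν_def
    have hfinν : ∀ j, IsFiniteMeasure (ν j) := fun j =>
      Measure.isFiniteMeasure_map _ _
    have hνK : ∀ j, ν j (Set.Icc 0 T ×ˢ X)ᶜ = 0 := by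
      intro j
      rw [hν_def, Measure.map_apply measurable_fst hKm.compl,
        Measure.restrict_apply (measurable_fst hKm.compl)]
      refine measure_mono_null ?_ hμnull
      intro q hq hmem
      exact hq.1 hmem.1
    have hdecomp : μ = ∑ j, (ν j).map (fun p => (p, e j)) :=
      decomp_measure T X hX e he U hUe μ hμnull
    refine ⟨ν, hfinν, hνK, ?_, ?_⟩
    · intro v hv
      rw [← hcon v hv, hdecomp,
        key_integral T X hX e U hUe ν hfinν hνK _ (hgder v hv)]
      refine Finset.sum_congr rfl fun j _ => ?_
      refine integral_congr_ae (Filter.Eventually.of_forall fun p => ?_)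
      simp only [hsingle_smul j p]
    · rw [← hcost, hdecomp,
        key_integral T X hX e U hUe ν hfinν hνK _ hgcost]
      refine Finset.sum_congr rfl fun j _ => ?_
      refine integral_congr_ae (Filter.Eventually.of_forall fun p => ?_)
      simp only [hsingle_mul j p]
  · rintro ⟨ν, hfinν, hνK, hcon, hcost⟩
    refine ⟨∑ j, (ν j).map (fun p => (p, e j)), ?_, ?_, ?_, ?_⟩
    · constructor
      rw [Measure.finset_sum_apply]
      refine ENNReal.sum_lt_top.mpr fun j _ => ?_
      haveI := hfinν j
      haveI := Measure.isFiniteMeasure_map (ν j) (fun p => (p, e j))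
      exact measure_lt_top _ _
    · rw [Measure.finset_sum_apply]
      refine Finset.sum_eq_zero fun j _ => ?_
      rw [Measure.map_apply (hι j) hKUm.compl]
      have hpre : ((fun p : ℝ × (Fin n → ℝ) => (p, e j)) ⁻¹'
          ((Set.Icc 0 T ×ˢ X) ×ˢ U)ᶜ) = (Set.Icc 0 T ×ˢ X)ᶜ := by
        ext p
        simp [Set.mem_prod, hUe, Set.mem_range_self]
      rw [hpre]
      exact hνK j
    · intro v hv
      rw [key_integral T X hX e U hUe ν hfinν hνK _ (hgder v hv), ← hcon v hv]
      refine Finset.sum_congr rfl fun j _ => ?_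
      refine integral_congr_ae (Filter.Eventually.of_forall fun p => ?_)
      simp only [hsingle_smul j p]
    · rw [key_integral T X hX e U hUe ν hfinν hνK _ hgcost, ← hcost]
      refine Finset.sum_congr rfl fun j _ => ?_
      refine integral_congr_ae (Filter.Eventually.of_forall fun p => ?_)
      simp only [hsingle_mul j p]
end
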